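/- Let N ≥ 18 be an integer, c₄ = 2 + 1/N, and q ≥ 16N + 9 a real number. Define g(β) = ((q−1)^β / (β^(2β)·(1−β)^(1−β)))·(1/q + ((q−1)/q)·(β/q)^(c₄β)). Then g(2N/(2N+1)) ≤ 1. -/

import Mathlib

set_option maxHeartbeats 1000000


theorem stmt_19 (N : ℕ) (hN : 18 ≤ N) (c₄ q : ℝ)
    (hc₄ : c₄ = 2 + 1 / (N : ℝ)) (hq : 16 * (N : ℝ) + 9 ≤ q) :
    ((q - 1) ^ ((2 * (N : ℝ)) / (2 * (N : ℝ) + 1)) /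
        (((2 * (N : ℝ)) / (2 * (N : ℝ) + 1)) ^ (2 * ((2 * (N : ℝ)) / (2 * (N : ℝ) + 1))) *
          (1 - (2 * (N : ℝ)) / (2 * (N : ℝ) + 1)) ^ (1 - (2 * (N : ℝ)) / (2 * (N : ℝ) + 1)))) *
      (1 / q + ((q - 1) / q) *
        (((2 * (N : ℝ)) / (2 * (N : ℝ) + 1)) / q) ^ (c₄ * ((2 * (N : ℝ)) / (2 * (N : ℝ) + 1))))
      ≤ 1 := by
  have hn : (18:ℝ) ≤ (N:ℝ) := by exact_mod_cast hN
  set n : ℝ := (N:ℝ) with hndef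
  set β : ℝ := 2 * n / (2 * n + 1) with hβdef
  have hn0 : 0 < n := by linarith
  have hd0 : 0 < 2 * n + 1 := by linarith
  have hβpos : 0 < β := by rw [hβdef]; exact div_pos (by linarith) hd0
  have hβlt : β < 1 := by rw [hβdef, div_lt_one hd0]; linarith
  have ht : 0 < 1 - β := by linarith
  have h1β : 1 - β = 1 / (2*n+1) := by
    rw [hβdef]; field_simp; ring
  have hq0 : 0 < q := by linarith
  have hqm1 : 0 < q - 1 := by linarith
  have hcβ : c₄ * β = 2 := by
    rw [hc₄, hβdef]; field_simp
  -- rewrite the rpow with exponent c₄ * β as a square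
  rw [hcβ, show (2:ℝ) = ((2:ℕ):ℝ) by norm_num, Real.rpow_natCast]
  -- key power inequality: β^(2β) ≥ 8^(-(1-β))
  have hb8 : (8:ℝ) ^ (-(1-β)) ≤ β ^ (2*β) := by
    rw [Real.rpow_def_of_pos (by norm_num : (0:ℝ) < 8),
        Real.rpow_def_of_pos hβpos, Real.exp_le_exp]
    have hlog8 : Real.log 8 = 3 * Real.log 2 := by
      rw [show (8:ℝ) = 2^3 by norm_num, Real.log_pow]; push_cast; ring
    have hβinv : β⁻¹ - 1 = 1/(2*n) := by
      rw [hβdef]; field_simp; ring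
    have hL : Real.log β⁻¹ ≤ 1/(2*n) := by
      have := Real.log_le_sub_one_of_pos (inv_pos.mpr hβpos)
      linarith [hβinv ▸ this]
    have hlogβ : Real.log β = - Real.log β⁻¹ := by
      rw [Real.log_inv]; ring
    have hlog2 : (0.6931471803:ℝ) < Real.log 2 := Real.log_two_gt_d9
    have hbn : 2 * β * (1/(2*n)) = 2 * (1 - β) := by
      rw [hβdef, h1β]; field_simp
    have hmul : 2 * β * Real.log β⁻¹ ≤ 2 * β * (1/(2*n)) := by
      have := mul_le_mul_of_nonneg_left hL (by positivity : (0:ℝ) ≤ 2 * β)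
      linarith
    rw [hlog8, hlogβ]
    nlinarith [mul_pos ht (by linarith : (0:ℝ) < 3 * Real.log 2 - 2)]
  -- (1-β)*(q-1) ≥ 8
  have h8le : (8:ℝ) ≤ (1-β) * (q-1) := by
    rw [h1β]
    rw [div_mul_eq_mul_div, le_div_iff₀ hd0]
    linarith
  have h8 : (8:ℝ)^(1-β) ≤ ((1-β)*(q-1))^(1-β) :=
    Real.rpow_le_rpow (by norm_num) h8le ht.le
  have hone : 1 ≤ β^(2*β) * ((1-β)^(1-β) * (q-1)^(1-β)) := by
    have h0 : ((1-β)*(q-1))^(1-β) = (1-β)^(1-β) * (q-1)^(1-β) :=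
      Real.mul_rpow ht.le hqm1.le
    calc (1:ℝ) = (8:ℝ)^(-(1-β)) * (8:ℝ)^(1-β) := by
          rw [← Real.rpow_add (by norm_num)]; simp
      _ ≤ β^(2*β) * ((1-β)^(1-β) * (q-1)^(1-β)) := by
          rw [← h0]
          exact mul_le_mul hb8 h8 (by positivity) (by positivity)
  have h3 : (q-1)^β * (q-1)^(1-β) = q - 1 := by
    rw [← Real.rpow_add hqm1]; simp
  have key : (q-1)^β ≤ (q-1) * (β^(2*β) * (1-β)^(1-β)) := by
    have h2 : (q-1)^β * 1 ≤ (q-1)^β * (β^(2*β) * ((1-β)^(1-β) * (q-1)^(1-β))) :=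
      mul_le_mul_of_nonneg_left hone (Real.rpow_nonneg hqm1.le _)
    have h4 : (q-1)^β * (β^(2*β) * ((1-β)^(1-β) * (q-1)^(1-β)))
        = ((q-1)^β * (q-1)^(1-β)) * (β^(2*β) * (1-β)^(1-β)) := by ring
    rw [h4, h3] at h2
    linarith
  have hA : 0 < β^(2*β) * (1-β)^(1-β) := by positivity
  have hM : 0 < 1/q + ((q-1)/q) * (β/q)^2 := by positivity
  have h1 : (q-1)^β / (β^(2*β) * (1-β)^(1-β)) ≤ q - 1 := by
    rw [div_le_iff₀ hA]; linarith [key]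
  have hstep : (q-1)^β / (β^(2*β) * (1-β)^(1-β)) * (1/q + ((q-1)/q) * (β/q)^2)
      ≤ (q-1) * (1/q + ((q-1)/q) * (β/q)^2) :=
    mul_le_mul_of_nonneg_right h1 hM.le
  have hβ2 : (β/q)^2 ≤ (1/q)^2 := by
    have hbq : β/q ≤ 1/q := by gcongr ?_/q
    exact pow_le_pow_left₀ (by positivity) hbq 2
  have hfin : (q-1) * (1/q + ((q-1)/q) * (β/q)^2) ≤ 1 := by
    have hb2 : β^2 ≤ 1 := by nlinarith
    have expand : (q-1) * (1/q + ((q-1)/q) * (β/q)^2)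
        = ((q-1) * q^2 + (q-1)^2 * β^2) / q^3 := by
      field_simp
    rw [expand, div_le_one (by positivity)]
    nlinarith [sq_nonneg (q-1), mul_le_mul_of_nonneg_left hb2 (sq_nonneg (q-1))]
  linarith
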